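/- For natural numbers n and k with 0 ≤ k ≤ n-1 and any real x, the sum over σ in the symmetric group S_n of sign(σ)·fix(σ)·(fix(σ)-1)···(fix(σ)-k+1)·x^(fix(σ)-k) equals (x-1)^(n-k-1) · n! · (x + n - k - 1)/(n-k)!, where terms with fix(σ) < k vanish since the falling factorial is zero. -/

import Mathlib

open Finset

lemma base_ne (n : ℕ) (x : ℝ) (hx : x ≠ 1) :
    (∑ σ : Equiv.Perm (Fin n),
      ((Equiv.Perm.sign σ : ℤ) : ℝ) * x ^ (Finset.univ.filter fun i => σ i = i).card)
      = (x - 1) ^ n + n * (x - 1) ^ (n - 1) := by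
  have hx1 : x - 1 ≠ 0 := sub_ne_zero.mpr hx
  set M : Matrix (Fin n) (Fin n) ℝ := Matrix.of fun i j => if i = j then x else 1 with hM
  have hdet : M.det = ∑ σ : Equiv.Perm (Fin n),
      ((Equiv.Perm.sign σ : ℤ) : ℝ) * x ^ (Finset.univ.filter fun i => σ i = i).card := by
    rw [Matrix.det_apply]
    refine Finset.sum_congr rfl fun σ _ => ?_
    have : (∏ i, M (σ i) i) = x ^ (Finset.univ.filter fun i => σ i = i).card := by
      simp only [hM, Matrix.of_apply]
      rw [Finset.prod_ite, Finset.prod_const, Finset.prod_const_one, mul_one]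
    rw [this, Units.smul_def, zsmul_eq_mul]
  have hfac : M = (x - 1) • (1 + Matrix.replicateCol Unit (fun _ => (x-1)⁻¹) * Matrix.replicateRow Unit (fun _ => (1:ℝ))) := by
    ext i j
    by_cases h : i = j <;>
      simp [hM, h, Matrix.mul_apply, Matrix.one_apply, mul_add, mul_inv_cancel₀ hx1]
  have hdet2 : M.det = (x - 1) ^ n * (1 + n * (x - 1)⁻¹) := by
    rw [hfac, Matrix.det_smul, Matrix.det_one_add_replicateCol_mul_replicateRow]
    simp [dotProduct, Fintype.card_fin, mul_comm]
  rw [← hdet, hdet2]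
  rcases Nat.eq_zero_or_pos n with h0 | h0
  · simp [h0]
  · have : (x - 1) ^ n = (x - 1) ^ (n - 1) * (x - 1) := by
      rw [← pow_succ, Nat.sub_add_cancel h0]
    rw [this]
    field_simp

lemma base (n : ℕ) (x : ℝ) :
    (∑ σ : Equiv.Perm (Fin n),
      ((Equiv.Perm.sign σ : ℤ) : ℝ) * x ^ (Finset.univ.filter fun i => σ i = i).card)
      = (x - 1) ^ n + n * (x - 1) ^ (n - 1) := by
  have := Continuous.ext_on (dense_compl_singleton (1:ℝ))
    (f := fun x : ℝ => ∑ σ : Equiv.Perm (Fin n),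
      ((Equiv.Perm.sign σ : ℤ) : ℝ) * x ^ (Finset.univ.filter fun i => σ i = i).card)
    (g := fun x : ℝ => (x - 1) ^ n + n * (x - 1) ^ (n - 1))
    (by continuity) (by continuity)
    (fun y hy => base_ne n y hy)
  exact congrFun this x

lemma aux (n : ℕ) : ∀ k, k ≤ n - 1 → ∀ x : ℝ,
    (∑ σ : Equiv.Perm (Fin n),
      ((Equiv.Perm.sign σ : ℤ) : ℝ) *
        (Nat.descFactorial (Finset.univ.filter fun i => σ i = i).card k : ℝ) *
        x ^ ((Finset.univ.filter fun i => σ i = i).card - k))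
    = (n.descFactorial k : ℝ) * (x - 1) ^ (n - k)
      + (n * (n - 1).descFactorial k : ℝ) * (x - 1) ^ (n - 1 - k) := by
  intro k
  induction k with
  | zero =>
    intro _ x
    simpa using base n x
  | succ k ih =>
    intro hk1 x
    have hk : k ≤ n - 1 := Nat.le_of_succ_le hk1
    have hfun : (fun y : ℝ => ∑ σ : Equiv.Perm (Fin n),
        ((Equiv.Perm.sign σ : ℤ) : ℝ) *
          (Nat.descFactorial (Finset.univ.filter fun i => σ i = i).card k : ℝ) *
          y ^ ((Finset.univ.filter fun i => σ i = i).card - k))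
        = (fun y : ℝ => (n.descFactorial k : ℝ) * (y - 1) ^ (n - k)
          + (n * (n - 1).descFactorial k : ℝ) * (y - 1) ^ (n - 1 - k)) :=
      funext fun y => ih hk y
    -- derivative of LHS
    have hL : HasDerivAt (fun y : ℝ => ∑ σ : Equiv.Perm (Fin n),
        ((Equiv.Perm.sign σ : ℤ) : ℝ) *
          (Nat.descFactorial (Finset.univ.filter fun i => σ i = i).card k : ℝ) *
          y ^ ((Finset.univ.filter fun i => σ i = i).card - k))
        (∑ σ : Equiv.Perm (Fin n),
          ((Equiv.Perm.sign σ : ℤ) : ℝ) *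
            (Nat.descFactorial (Finset.univ.filter fun i => σ i = i).card k : ℝ) *
            (((Finset.univ.filter fun i => σ i = i).card - k : ℕ) *
              x ^ ((Finset.univ.filter fun i => σ i = i).card - k - 1))) x := by
      apply HasDerivAt.fun_sum
      intro σ _
      simpa [mul_assoc] using
        (hasDerivAt_pow ((Finset.univ.filter fun i => σ i = i).card - k) x).const_mul
          (((Equiv.Perm.sign σ : ℤ) : ℝ) *
            (Nat.descFactorial (Finset.univ.filter fun i => σ i = i).card k : ℝ))
    -- derivative of RHS
    have hR : HasDerivAt (fun y : ℝ => (n.descFactorial k : ℝ) * (y - 1) ^ (n - k)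
          + (n * (n - 1).descFactorial k : ℝ) * (y - 1) ^ (n - 1 - k))
        ((n.descFactorial k : ℝ) * ((n - k : ℕ) * (x - 1) ^ (n - k - 1) * 1)
          + (n * (n - 1).descFactorial k : ℝ) *
            ((n - 1 - k : ℕ) * (x - 1) ^ (n - 1 - k - 1) * 1)) x := by
      exact ((((hasDerivAt_id x).sub_const 1).pow (n - k)).const_mul _).add
        ((((hasDerivAt_id x).sub_const 1).pow (n - 1 - k)).const_mul _)
    have heq : (∑ σ : Equiv.Perm (Fin n),
          ((Equiv.Perm.sign σ : ℤ) : ℝ) *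
            (Nat.descFactorial (Finset.univ.filter fun i => σ i = i).card k : ℝ) *
            (((Finset.univ.filter fun i => σ i = i).card - k : ℕ) *
              x ^ ((Finset.univ.filter fun i => σ i = i).card - k - 1)))
        = ((n.descFactorial k : ℝ) * ((n - k : ℕ) * (x - 1) ^ (n - k - 1) * 1)
          + (n * (n - 1).descFactorial k : ℝ) *
            ((n - 1 - k : ℕ) * (x - 1) ^ (n - 1 - k - 1) * 1)) := by
      have := hR
      rw [← hfun] at this
      exact hL.unique this
    calc (∑ σ : Equiv.Perm (Fin n),
          ((Equiv.Perm.sign σ : ℤ) : ℝ) *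
            (Nat.descFactorial (Finset.univ.filter fun i => σ i = i).card (k+1) : ℝ) *
            x ^ ((Finset.univ.filter fun i => σ i = i).card - (k+1)))
        = ∑ σ : Equiv.Perm (Fin n),
          ((Equiv.Perm.sign σ : ℤ) : ℝ) *
            (Nat.descFactorial (Finset.univ.filter fun i => σ i = i).card k : ℝ) *
            (((Finset.univ.filter fun i => σ i = i).card - k : ℕ) *
              x ^ ((Finset.univ.filter fun i => σ i = i).card - k - 1)) := by
          refine Finset.sum_congr rfl fun σ _ => ?_
          rw [Nat.descFactorial_succ, Nat.sub_succ', Nat.sub_sub]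
          push_cast
          ring
      _ = _ := by
          rw [heq, Nat.descFactorial_succ, Nat.descFactorial_succ,
            show n - (k+1) = n - k - 1 from by omega,
            show n - 1 - (k+1) = n - 1 - k - 1 from by omega]
          push_cast
          ring

theorem deriv_identity (n k : ℕ) (hn : 1 ≤ n) (hk : k ≤ n - 1) (x : ℝ) :
    (∑ σ : Equiv.Perm (Fin n),
      ((Equiv.Perm.sign σ : ℤ) : ℝ) *
        (Nat.descFactorial (Finset.univ.filter fun i => σ i = i).card k : ℝ) *
        x ^ ((Finset.univ.filter fun i => σ i = i).card - k))
      = (x - 1) ^ (n - k - 1) * (n.factorial : ℝ) * (x + n - k - 1) / ((n - k).factorial : ℝ) := by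
  rw [aux n k hk x]
  have hkn : k ≤ n := le_trans hk (Nat.sub_le n 1)
  have hkn' : k < n := lt_of_le_of_lt hk (Nat.sub_lt hn one_pos)
  have h1 : 1 ≤ n - k := by omega
  have hfac : ((n - k).factorial : ℝ) ≠ 0 := Nat.cast_ne_zero.mpr (Nat.factorial_ne_zero _)
  rw [eq_div_iff hfac]
  -- nat identities
  have e1 : (n - k).factorial * n.descFactorial k = n.factorial :=
    Nat.factorial_mul_descFactorial hkn
  have e2 : (n - k).factorial * (n * (n - 1).descFactorial k) = n.factorial * (n - k) := by
    have hkn1 : k ≤ n - 1 := hk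
    have e3 : (n - 1 - k).factorial * (n - 1).descFactorial k = (n - 1).factorial :=
      Nat.factorial_mul_descFactorial hkn1
    have e4 : (n - k).factorial = (n - k) * (n - 1 - k).factorial := by
      have : n - k = (n - 1 - k) + 1 := by omega
      rw [this, Nat.factorial_succ]
    have e5 : n.factorial = n * (n - 1).factorial := (Nat.mul_factorial_pred (by omega)).symm
    calc (n - k).factorial * (n * (n - 1).descFactorial k)
        = n * ((n - 1 - k).factorial * (n - 1).descFactorial k) * (n - k) := by
          rw [e4]; ring
      _ = n.factorial * (n - k) := by rw [e3, ← e5]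
  have hp : (x - 1) ^ (n - k) = (x - 1) ^ (n - k - 1) * (x - 1) := by
    rw [← pow_succ, Nat.sub_add_cancel h1]
  have hq : n - 1 - k = n - k - 1 := by omega
  have e1' := congrArg (Nat.cast : ℕ → ℝ) e1
  have e2' := congrArg (Nat.cast : ℕ → ℝ) e2
  push_cast [Nat.cast_sub hkn] at e1' e2' ⊢
  rw [hp, hq]
  linear_combination ((x-1)^(n-k-1) * (x-1)) * e1' + (x-1)^(n-k-1) * e2'
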